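/- Let C_3(n) denote the number of permutations σ of {1,…,n} with gcd(j, σ(j), 6) = 1 for all j. Then C_3(6n) = ((2n)!²/n!)². -/

import Mathlib

open Fintype

section CountA
variable {X Y : Type} [Fintype X] [Fintype Y] [DecidableEq X] [DecidableEq Y]
  (p : X → Prop) (q : Y → Prop) [DecidablePred p] [DecidablePred q]

/-- restriction of a constrained equiv to an embedding of subtypes -/
def restrictEmb (f : {f : X ≃ Y // ∀ x, p x → q (f x)}) : {x // p x} ↪ {y // q y} :=
  ⟨fun a => ⟨f.1 a, f.2 a a.2⟩, fun a b h =>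
    Subtype.ext (f.1.injective (congrArg Subtype.val h))⟩

noncomputable def fiberEquiv (e : {x // p x} ↪ {y // q y}) (h : card X = card Y) :
    {f : {f : X ≃ Y // ∀ x, p x → q (f x)} // restrictEmb p q f = e} ≃
    ({x // ¬ p x} ≃ {y : Y // ¬ ∃ a, ((e a : {y // q y}) : Y) = y}) where
  toFun f :=
    { toFun := fun x => ⟨f.1.1 x, by
        rintro ⟨a, ha⟩
        have : ((restrictEmb p q f.1 a : {y // q y}) : Y) = f.1.1 x := by rw [f.2]; exact ha
        have hax : (a : X) = x := f.1.1.injective this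
        exact x.2 (hax ▸ a.2)⟩
      invFun := fun y => ⟨f.1.1.symm y, by
        intro hp
        exact y.2 ⟨⟨f.1.1.symm y, hp⟩, by
          have : ((restrictEmb p q f.1 ⟨f.1.1.symm y, hp⟩ : {y // q y}) : Y) = y := by
            exact f.1.1.apply_symm_apply y
          rw [f.2] at this; exact this⟩⟩
      left_inv := fun x => Subtype.ext (f.1.1.symm_apply_apply x)
      right_inv := fun y => Subtype.ext (f.1.1.apply_symm_apply y) }
  invFun g := by
    refine ⟨⟨Equiv.ofBijective (fun x => if hx : p x then ((e ⟨x, hx⟩ : {y // q y}) : Y) else ((g ⟨x, hx⟩ : {y : Y // _}) : Y)) ?_, ?_⟩, ?_⟩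
    · refine (Fintype.bijective_iff_injective_and_card _).mpr ⟨?_, h⟩
      intro a b hab
      by_cases ha : p a <;> by_cases hb : p b <;> simp [ha, hb] at hab
      · exact congrArg Subtype.val (e.injective (Subtype.ext hab))
      · exact absurd ⟨⟨a, ha⟩, hab⟩ (g ⟨b, hb⟩).2
      · exact absurd ⟨⟨b, hb⟩, hab.symm⟩ (g ⟨a, ha⟩).2
      · exact congrArg Subtype.val (g.injective (Subtype.ext hab))
    · intro x hx
      simp only [Equiv.ofBijective_apply, dif_pos hx]
      exact (e ⟨x, hx⟩).2
    · ext a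
      simp [restrictEmb, Equiv.ofBijective_apply, dif_pos a.2]
  left_inv f := by
    apply Subtype.ext; apply Subtype.ext; apply Equiv.ext
    intro x
    by_cases hx : p x
    · simp only [Equiv.ofBijective_apply, dif_pos hx]
      have : (restrictEmb p q f.1 ⟨x, hx⟩ : {y // q y}) = e ⟨x, hx⟩ := by rw [f.2]
      have := congrArg Subtype.val this
      exact this.symm
    · simp only [Equiv.ofBijective_apply, dif_neg hx]
      rfl
  right_inv g := by
    apply Equiv.ext
    intro x
    apply Subtype.ext
    simp only [Equiv.ofBijective_apply]
    exact dif_neg x.2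

lemma cardA (h : card X = card Y) :
    card {f : X ≃ Y // ∀ x, p x → q (f x)} =
      (card {y // q y}).descFactorial (card {x // p x}) *
        (card X - card {x // p x}).factorial := by
  rw [← Fintype.card_congr (Equiv.sigmaFiberEquiv (restrictEmb p q)), Fintype.card_sigma]
  have hfib : ∀ e : {x // p x} ↪ {y // q y},
      card {f // restrictEmb p q f = e} = (card X - card {x // p x}).factorial := by
    intro e
    rw [Fintype.card_congr (fiberEquiv p q e h)]
    have hc : card {y : Y // ¬ ∃ a, ((e a : {y // q y}) : Y) = y} = card {x // ¬ p x} := by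
      have hr : card {y : Y // ∃ a, ((e a : {y // q y}) : Y) = y} = card {x // p x} := by
        refine (Fintype.card_congr (Equiv.ofBijective
          (fun a : {x // p x} => (⟨((e a : {y // q y}) : Y), ⟨a, rfl⟩⟩ :
            {y : Y // ∃ a, ((e a : {y // q y}) : Y) = y})) ⟨?_, ?_⟩)).symm
        · intro a b hab
          have : ((e a : {y // q y}) : Y) = ((e b : {y // q y}) : Y) := by
            simpa [Subtype.ext_iff] using hab
          exact e.injective (Subtype.ext this)
        · rintro ⟨y, a, rfl⟩
          exact ⟨a, rfl⟩
      rw [Fintype.card_subtype_compl, hr, Fintype.card_subtype_compl, h]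
    rw [Fintype.card_equiv (Fintype.equivOfCardEq hc.symm)]
    rw [Fintype.card_subtype_compl]
  simp only [hfib, Finset.sum_const, smul_eq_mul, Finset.card_univ, Fintype.card_embedding_eq]
end CountA

section CountB
variable {X : Type} [Fintype X] [DecidableEq X]
  (p b : X → Prop) [DecidablePred p] [DecidablePred b]

lemma compl_of (σ : Equiv.Perm X) (h1 : ∀ x, p x → ¬ p (σ x))
    (hc : card {x // p x} = card {x // ¬ p x}) : ∀ x, ¬ p x → p (σ x) := by
  have hbij : Function.Bijective (fun a : {x // p x} => (⟨σ a, h1 a a.2⟩ : {x // ¬ p x})) := by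
    refine (Fintype.bijective_iff_injective_and_card _).mpr ⟨?_, hc⟩
    intro a c h
    exact Subtype.ext (σ.injective (congrArg Subtype.val h))
  intro x hx
  by_contra hσ
  obtain ⟨a, ha⟩ := hbij.2 ⟨σ x, hσ⟩
  have hax : (a : X) = x := σ.injective (congrArg Subtype.val ha)
  exact hx (hax ▸ a.2)

noncomputable def splitEquiv :
    {σ : Equiv.Perm X // (∀ x, p x → ¬ p (σ x)) ∧ (∀ x, ¬ p x → p (σ x)) ∧
      (∀ x, b x → ¬ b (σ x))} ≃
    ({f : {x // p x} ≃ {x // ¬ p x} // ∀ a, b a.val → ¬ b (f a).val} ×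
     {g : {x // ¬ p x} ≃ {x // p x} // ∀ a, b a.val → ¬ b (g a).val}) where
  toFun σ :=
    (⟨{ toFun := fun a => ⟨σ.1 a, σ.2.1 a a.2⟩
        invFun := fun y => ⟨σ.1.symm y, by
          by_contra hp
          have := σ.2.2.1 _ hp
          rw [σ.1.apply_symm_apply] at this
          exact y.2 this⟩
        left_inv := fun a => Subtype.ext (σ.1.symm_apply_apply a)
        right_inv := fun y => Subtype.ext (σ.1.apply_symm_apply y) },
      fun a ha => σ.2.2.2 a ha⟩,
     ⟨{ toFun := fun a => ⟨σ.1 a, σ.2.2.1 a a.2⟩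
        invFun := fun y => ⟨σ.1.symm y, by
          intro hp
          have := σ.2.1 _ hp
          rw [σ.1.apply_symm_apply] at this
          exact this y.2⟩
        left_inv := fun a => Subtype.ext (σ.1.symm_apply_apply a)
        right_inv := fun y => Subtype.ext (σ.1.apply_symm_apply y) },
      fun a ha => σ.2.2.2 a ha⟩)
  invFun fg := by
    refine ⟨Equiv.ofBijective
      (fun x => if hx : p x then ((fg.1.1 ⟨x, hx⟩ : {x // ¬ p x}) : X)
        else ((fg.2.1 ⟨x, hx⟩ : {x // p x}) : X)) ?_, ?_, ?_, ?_⟩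
    · refine (Fintype.bijective_iff_injective_and_card _).mpr ⟨?_, rfl⟩
      intro a c h
      by_cases ha : p a <;> by_cases hc : p c <;> simp [ha, hc] at h
      · exact congrArg Subtype.val (fg.1.1.injective (Subtype.ext h))
      · exact absurd (h ▸ (fg.2.1 ⟨c, hc⟩).2) (fg.1.1 ⟨a, ha⟩).2
      · exact absurd (h ▸ (fg.2.1 ⟨a, ha⟩).2) ((fg.1.1 ⟨c, hc⟩).2)
      · exact congrArg Subtype.val (fg.2.1.injective (Subtype.ext h))
    · intro x hx
      simp only [Equiv.ofBijective_apply, dif_pos hx]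
      exact (fg.1.1 ⟨x, hx⟩).2
    · intro x hx
      simp only [Equiv.ofBijective_apply, dif_neg hx]
      exact (fg.2.1 ⟨x, hx⟩).2
    · intro x hx
      by_cases hp : p x
      · simp only [Equiv.ofBijective_apply, dif_pos hp]
        exact fg.1.2 ⟨x, hp⟩ hx
      · simp only [Equiv.ofBijective_apply, dif_neg hp]
        exact fg.2.2 ⟨x, hp⟩ hx
  left_inv σ := by
    apply Subtype.ext; apply Equiv.ext
    intro x
    by_cases hx : p x
    · simp only [Equiv.ofBijective_apply, dif_pos hx]
      rfl
    · simp only [Equiv.ofBijective_apply, dif_neg hx]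
      rfl
  right_inv fg := by
    refine Prod.ext ?_ ?_ <;> apply Subtype.ext <;> apply Equiv.ext <;> intro a <;>
      apply Subtype.ext
    · exact dif_pos a.2
    · exact dif_neg a.2
end CountB

lemma gcd6_iff (u v : ℕ) :
    Nat.gcd (Nat.gcd u v) 6 = 1 ↔ ((2 ∣ u → ¬ 2 ∣ v) ∧ (3 ∣ u → ¬ 3 ∣ v)) := by
  rw [show Nat.gcd (Nat.gcd u v) 6 = 1 ↔ Nat.Coprime (Nat.gcd u v) 6 from Iff.rfl,
    show (6:ℕ) = 2*3 from rfl, Nat.coprime_mul_iff_right,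
    Nat.coprime_comm (m := 2), Nat.coprime_comm (m := 3),
    Nat.Prime.coprime_iff_not_dvd Nat.prime_two, Nat.Prime.coprime_iff_not_dvd Nat.prime_three,
    Nat.dvd_gcd_iff, Nat.dvd_gcd_iff]
  tauto

lemma cardFinDvd (N d : ℕ) : card {x : Fin N // d ∣ x.val + 1} = N / d := by
  rw [Fintype.card_subtype, Finset.card_filter,
    Fin.sum_univ_eq_sum_range (fun i => if d ∣ i + 1 then 1 else 0) N,
    ← Finset.card_filter]
  exact Nat.card_multiples N d

/-- The number of permutations `σ` of `{1,…,n}` (encoded as permutations of `Fin n`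
via `j ↦ j+1`) with `gcd(j, σ j, 3!) = gcd(j, σ j, 6) = 1` for all `j`. -/
def C3 (n : ℕ) : ℕ :=
  Fintype.card
    {σ : Equiv.Perm (Fin n) // ∀ j, Nat.gcd (Nat.gcd (j.val + 1) ((σ j).val + 1)) 6 = 1}

theorem stmt_18 (n : ℕ) :
    C3 (6 * n) = ((2 * n).factorial ^ 2 / n.factorial) ^ 2 := by
  classical
  set N := 6 * n with hN
  set p : Fin N → Prop := fun x => 2 ∣ x.val + 1 with hp
  set b : Fin N → Prop := fun x => 3 ∣ x.val + 1 with hb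
  -- basic cardinalities
  have hc2 : card {x : Fin N // p x} = 3 * n := by
    simp only [hp]
    rw [cardFinDvd N 2]; omega
  have hc3 : card {x : Fin N // b x} = 2 * n := by
    simp only [hb]
    rw [cardFinDvd N 3]; omega
  have hc6 : card {x : Fin N // p x ∧ b x} = n := by
    rw [Fintype.card_congr (Equiv.subtypeEquivRight (q := fun x : Fin N => 6 ∣ x.val + 1)
      (fun x => by simp only [hp, hb]; omega))]
    rw [cardFinDvd N 6]; omega
  have hcnp : card {x : Fin N // ¬ p x} = 3 * n := by
    rw [Fintype.card_subtype_compl, hc2, Fintype.card_fin]; omega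
  -- nested cardinalities
  have hXb : card {a : {x : Fin N // p x} // b a.val} = n := by
    rw [Fintype.card_congr (Equiv.subtypeSubtypeEquivSubtypeInter p b), hc6]
  have hXnb : card {a : {x : Fin N // p x} // ¬ b a.val} = 2 * n := by
    rw [Fintype.card_subtype_compl, hXb, hc2]; omega
  have hYb : card {a : {x : Fin N // ¬ p x} // b a.val} = n := by
    rw [Fintype.card_congr (Equiv.subtypeSubtypeEquivSubtypeInter (fun x => ¬ p x) b)]
    rw [Fintype.card_congr (Equiv.subtypeEquivRight
      (q := fun x : Fin N => b x ∧ ¬ (p x ∧ b x)) (fun x => by tauto))]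
    rw [Fintype.card_congr (Equiv.subtypeSubtypeEquivSubtypeInter
      (fun x : Fin N => b x) (fun x => ¬ (p x ∧ b x))).symm]
    rw [Fintype.card_congr (Equiv.subtypeEquivRight
      (p := fun a : {x : Fin N // b x} => ¬ (p a.val ∧ b a.val))
      (q := fun a : {x : Fin N // b x} => ¬ (p a.val)) (fun a => by
        have := a.2; tauto))]
    rw [Fintype.card_subtype_compl, hc3]
    have hbp : card {a : {x : Fin N // b x} // p a.val} = n := by
      rw [Fintype.card_congr (Equiv.subtypeSubtypeEquivSubtypeInter b p)]
      rw [Fintype.card_congr (Equiv.subtypeEquivRight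
        (q := fun x : Fin N => p x ∧ b x) (fun x => by tauto))]
      exact hc6
    rw [hbp]; omega
  have hYnb : card {a : {x : Fin N // ¬ p x} // ¬ b a.val} = 2 * n := by
    rw [Fintype.card_subtype_compl, hYb, hcnp]; omega
  -- rewrite the defining condition
  have key : C3 N = card {σ : Equiv.Perm (Fin N) //
      (∀ x, p x → ¬ p (σ x)) ∧ (∀ x, ¬ p x → p (σ x)) ∧ (∀ x, b x → ¬ b (σ x))} := by
    apply Fintype.card_congr
    apply Equiv.subtypeEquivRight
    intro σ
    constructor
    · intro h
      have h1 : ∀ x, p x → ¬ p (σ x) := fun x hx => ((gcd6_iff _ _).mp (h x)).1 hx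
      have hbb : ∀ x, b x → ¬ b (σ x) := fun x hx => ((gcd6_iff _ _).mp (h x)).2 hx
      exact ⟨h1, compl_of p σ h1 (by rw [hc2, hcnp]), hbb⟩
    · rintro ⟨h1, _, hbb⟩ j
      exact (gcd6_iff _ _).mpr ⟨h1 j, hbb j⟩
  rw [show C3 (6 * n) = C3 N from rfl, key,
    Fintype.card_congr (splitEquiv p b), Fintype.card_prod]
  rw [cardA (fun a : {x : Fin N // p x} => b a.val)
      (fun a : {x : Fin N // ¬ p x} => ¬ b a.val) (by rw [hc2, hcnp]),
    cardA (fun a : {x : Fin N // ¬ p x} => b a.val)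
      (fun a : {x : Fin N // p x} => ¬ b a.val) (by rw [hc2, hcnp])]
  rw [hXb, hXnb, hYb, hYnb, hc2, hcnp]
  have hkey : n.factorial * (2 * n).descFactorial n = (2 * n).factorial := by
    have h := Nat.factorial_mul_descFactorial (show n ≤ 2 * n by omega)
    rwa [show 2 * n - n = n by omega] at h
  have hdiv : (2 * n).factorial ^ 2 / n.factorial =
      (2 * n).descFactorial n * (2 * n).factorial := by
    rw [pow_two, ← hkey, mul_assoc, Nat.mul_div_cancel_left _ n.factorial_pos]
  rw [hdiv, show 3 * n - n = 2 * n by omega]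
  ring
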